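/- arXiv:1402.1403 — 6 statements merged into one kernel-verified Lean document; each statement's English description precedes it below -/
import Mathlib

section
/- Let F be a field of characteristic different from 2 and let V be an infinite-dimensional F-vector space. Then the center of the exterior algebra Λ(V) is exactly the even part E⁰ of its natural ℤ₂-grading: an element a ∈ Λ(V) commutes with every element of Λ(V) if and only if a ∈ E⁰. -/
open CliffordAlgebra

section Aux

variable {F V : Type*} [Field F] [AddCommGroup V] [Module F V]

private lemma aux_swap (a b : V) :
    ι (0 : QuadraticForm F V) a * ι (0 : QuadraticForm F V) b
      = -(ι (0 : QuadraticForm F V) b * ι (0 : QuadraticForm F V) a) :=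
  ι_mul_ι_comm_of_isOrtho (QuadraticMap.IsOrtho.all a b)

private lemma aux_comm_pair (v m₁ m₂ : V) :
    ι (0 : QuadraticForm F V) v * (ι (0 : QuadraticForm F V) m₁ * ι (0 : QuadraticForm F V) m₂)
      = ι (0 : QuadraticForm F V) m₁ * ι (0 : QuadraticForm F V) m₂
        * ι (0 : QuadraticForm F V) v := by
  rw [← mul_assoc, aux_swap v m₁, neg_mul, mul_assoc, aux_swap v m₂, mul_neg, neg_neg, mul_assoc]

private lemma aux_even_comm {x : CliffordAlgebra (0 : QuadraticForm F V)}
    (hx : x ∈ evenOdd (0 : QuadraticForm F V) 0) (v : V) :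
    ι (0 : QuadraticForm F V) v * x = x * ι (0 : QuadraticForm F V) v := by
  induction x, hx using even_induction with
  | algebraMap r => exact (Algebra.commutes r _).symm
  | add x y hx hy ihx ihy => rw [mul_add, add_mul, ihx, ihy]
  | ι_mul_ι_mul m₁ m₂ x hx ih =>
    rw [← mul_assoc (ι 0 v), aux_comm_pair v m₁ m₂, mul_assoc, ih, ← mul_assoc]

private lemma aux_odd_anticomm {x : CliffordAlgebra (0 : QuadraticForm F V)}
    (hx : x ∈ evenOdd (0 : QuadraticForm F V) 1) (v : V) :
    ι (0 : QuadraticForm F V) v * x = -(x * ι (0 : QuadraticForm F V) v) := by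
  induction x, hx using odd_induction with
  | ι w => exact aux_swap v w
  | add x y hx hy ihx ihy => rw [mul_add, add_mul, ihx, ihy, neg_add]
  | ι_mul_ι_mul m₁ m₂ x hx ih =>
    rw [← mul_assoc (ι 0 v), aux_comm_pair v m₁ m₂, mul_assoc, ih, mul_neg, ← mul_assoc]

private lemma aux_contract_mul (d : Module.Dual F V)
    (y : CliffordAlgebra (0 : QuadraticForm F V)) :
    ∀ z : CliffordAlgebra (0 : QuadraticForm F V),
      contractLeft (Q := (0 : QuadraticForm F V)) d (y * z)
        = contractLeft (Q := (0 : QuadraticForm F V)) d y * z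
          + involute y * contractLeft (Q := (0 : QuadraticForm F V)) d z := by
  induction y using CliffordAlgebra.induction with
  | algebraMap r =>
    intro z
    rw [contractLeft_algebraMap_mul, contractLeft_algebraMap, zero_mul, zero_add,
      involute.commutes]
  | ι m =>
    intro z
    rw [contractLeft_ι_mul, contractLeft_ι, involute_ι, neg_mul, ← Algebra.smul_def,
      sub_eq_add_neg]
  | mul a b iha ihb =>
    intro z
    rw [mul_assoc, iha (b * z), ihb z, iha b, map_mul, mul_add, add_mul, mul_assoc,
      mul_assoc, ← add_assoc, mul_assoc (involute a) (involute b)]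
  | add a b iha ihb =>
    intro z
    rw [add_mul, map_add, map_add, map_add, add_mul, add_mul, iha z, ihb z]
    abel

private lemma aux_contract_adjoin (d : Module.Dual F V) (s : Set V) (hd : ∀ w ∈ s, d w = 0)
    {x : CliffordAlgebra (0 : QuadraticForm F V)}
    (hx : x ∈ Algebra.adjoin F (⇑(ι (0 : QuadraticForm F V)) '' s)) :
    contractLeft (Q := (0 : QuadraticForm F V)) d x = 0 := by
  induction hx using Algebra.adjoin_induction with
  | mem y hy =>
    obtain ⟨w, hw, rfl⟩ := hy
    rw [contractLeft_ι, hd w hw, map_zero]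
  | algebraMap r => exact contractLeft_algebraMap _ _ _
  | add x y hx hy ihx ihy => rw [map_add, ihx, ihy, add_zero]
  | mul x y hx hy ihx ihy => rw [aux_contract_mul, ihx, ihy, zero_mul, mul_zero, add_zero]

private lemma aux_exists_finset (x : CliffordAlgebra (0 : QuadraticForm F V)) :
    ∃ s : Finset V, x ∈ Algebra.adjoin F (⇑(ι (0 : QuadraticForm F V)) '' (s : Set V)) := by
  classical
  induction x using CliffordAlgebra.induction with
  | algebraMap r => exact ⟨∅, Subalgebra.algebraMap_mem _ r⟩
  | ι v => exact ⟨{v}, Algebra.subset_adjoin ⟨v, by simp, rfl⟩⟩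
  | mul a b iha ihb =>
    obtain ⟨s, hs⟩ := iha
    obtain ⟨t, ht⟩ := ihb
    refine ⟨s ∪ t, mul_mem (Algebra.adjoin_mono (Set.image_mono ?_) hs)
      (Algebra.adjoin_mono (Set.image_mono ?_) ht)⟩
    · simp
    · simp
  | add a b iha ihb =>
    obtain ⟨s, hs⟩ := iha
    obtain ⟨t, ht⟩ := ihb
    refine ⟨s ∪ t, add_mem (Algebra.adjoin_mono (Set.image_mono ?_) hs)
      (Algebra.adjoin_mono (Set.image_mono ?_) ht)⟩
    · simp
    · simp

private lemma aux_kill (hV : ¬ FiniteDimensional F V)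
    {x : CliffordAlgebra (0 : QuadraticForm F V)}
    (hx : ∀ v : V, ι (0 : QuadraticForm F V) v * x = 0) : x = 0 := by
  obtain ⟨s, hs⟩ := aux_exists_finset x
  set W : Submodule F V := Submodule.span F (s : Set V) with hWdef
  have hW : W ≠ ⊤ := by
    intro h
    exact hV ⟨⟨s, h⟩⟩
  obtain ⟨v, hv⟩ : ∃ v, v ∉ W := by
    by_contra h
    push_neg at h
    exact hW (Submodule.eq_top_iff'.mpr h)
  have hqv : W.mkQ v ≠ 0 := by
    intro h
    exact hv ((Submodule.Quotient.mk_eq_zero W).mp (by simpa using h))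
  obtain ⟨g, hg⟩ : ∃ g : Module.Dual F (V ⧸ W), g (W.mkQ v) ≠ 0 := by
    by_contra h
    push_neg at h
    exact hqv ((Module.forall_dual_apply_eq_zero_iff F (W.mkQ v)).mp h)
  set d : Module.Dual F V := (g (W.mkQ v))⁻¹ • (g ∘ₗ W.mkQ) with hd
  have hdv : d v = 1 := by
    rw [hd]
    simpa using inv_mul_cancel₀ hg
  have hdW : ∀ w ∈ (s : Set V), d w = 0 := by
    intro w hw
    have : W.mkQ w = 0 := (Submodule.Quotient.mk_eq_zero W).mpr (Submodule.subset_span hw)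
    rw [hd]
    simp [this]
  have hdx : contractLeft (Q := (0 : QuadraticForm F V)) d x = 0 :=
    aux_contract_adjoin d _ hdW hs
  have h0 := contractLeft_ι_mul (Q := (0 : QuadraticForm F V)) (d := d) v x
  rw [hx v, map_zero, hdx, mul_zero, sub_zero, hdv, one_smul] at h0
  exact h0.symm

end Aux

/-- If `V` is an infinite-dimensional vector space over a field `F` of characteristic ≠ 2,
then the center of the Grassmann algebra Λ(V) is exactly the even part `E⁰` of its natural
ℤ₂-grading. -/
theorem grassmann_center_eq_even_part
    (F : Type*) [Field F] (hchar : ringChar F ≠ 2)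
    (V : Type*) [AddCommGroup V] [Module F V]
    (hV : ¬ FiniteDimensional F V)
    (a : ExteriorAlgebra F V) :
    (∀ b : ExteriorAlgebra F V, a * b = b * a) ↔
      a ∈ CliffordAlgebra.evenOdd (0 : QuadraticForm F V) 0 := by
  constructor
  · intro h
    have htop : (⨆ i, evenOdd (0 : QuadraticForm F V) i) = ⊤ :=
      (DirectSum.Decomposition.isInternal
        (evenOdd (0 : QuadraticForm F V))).submodule_iSup_eq_top
    have hsup : evenOdd (0 : QuadraticForm F V) 0 ⊔ evenOdd (0 : QuadraticForm F V) 1 = ⊤ := by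
      rw [← htop]
      refine le_antisymm (sup_le (le_iSup _ 0) (le_iSup _ 1)) (iSup_le fun i => ?_)
      have hi : i = 0 ∨ i = 1 := by revert i; decide
      rcases hi with rfl | rfl
      · exact le_sup_left
      · exact le_sup_right
    have ha : a ∈ evenOdd (0 : QuadraticForm F V) 0 ⊔ evenOdd (0 : QuadraticForm F V) 1 := by
      rw [hsup]; trivial
    obtain ⟨a₀, h₀, a₁, h₁, rfl⟩ := Submodule.mem_sup.mp ha
    have key : ∀ v : V, ι (0 : QuadraticForm F V) v * a₁ = 0 := by
      intro v
      have h2 := (h (ι (0 : QuadraticForm F V) v)).symm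
      rw [add_mul, mul_add, aux_even_comm h₀ v, aux_odd_anticomm h₁ v] at h2
      have h3 : a₁ * ι (0 : QuadraticForm F V) v = -(a₁ * ι (0 : QuadraticForm F V) v) :=
        (add_right_injective _ h2).symm
      have h4 : (2 : F) • (a₁ * ι (0 : QuadraticForm F V) v) = 0 := by
        rw [two_smul]
        nth_rewrite 2 [h3]
        simp
      have h5 : a₁ * ι (0 : QuadraticForm F V) v = 0 :=
        (smul_eq_zero.mp h4).resolve_left (Ring.two_ne_zero hchar)
      rw [aux_odd_anticomm h₁ v, h5, neg_zero]
    have ha₁ : a₁ = 0 := aux_kill hV key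
    rw [ha₁, add_zero]
    exact h₀
  · intro ha b
    induction b using CliffordAlgebra.induction with
    | algebraMap r => exact (Algebra.commutes r a).symm
    | ι v => exact (aux_even_comm ha v).symm
    | mul x y ihx ihy => rw [← mul_assoc, ihx, mul_assoc, ihy, ← mul_assoc]
    | add x y ihx ihy => rw [mul_add, add_mul, ihx, ihy]
end

section
/- (Regev) Let F be a field of odd prime characteristic p and V an F-vector space. Then every element x of the augmentation ideal E* of the exterior algebra Λ(V) (the two-sided ideal generated by the image of ι) satisfies x^p = 0. In other words, x^p is a polynomial identity for the Grassmann algebra without unit. -/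
section Aux

variable {F : Type*} [Field F] {V : Type*} [AddCommGroup V] [Module F V]

open ExteriorAlgebra CliffordAlgebra

/-- `ι v` super-commutes with everything. -/
private lemma grassmann_iota_mul (v : V) (z : ExteriorAlgebra F V) :
    ExteriorAlgebra.ι F v * z = CliffordAlgebra.involute z * ExteriorAlgebra.ι F v := by
  induction z using CliffordAlgebra.induction with
  | algebraMap r => rw [AlgHom.commutes]; exact (Algebra.commutes r _).symm
  | ι w =>
      rw [CliffordAlgebra.involute_ι, neg_mul, eq_neg_iff_add_eq_zero]
      exact ExteriorAlgebra.ι_add_mul_swap v w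
  | mul a b ha hb => rw [← mul_assoc, ha, mul_assoc, hb, ← mul_assoc, ← map_mul]
  | add a b ha hb => rw [mul_add, ha, hb, ← add_mul, ← map_add]

/-- Even elements are central. -/
private lemma grassmann_even_comm {a : ExteriorAlgebra F V}
    (ha : CliffordAlgebra.involute a = a) (z : ExteriorAlgebra F V) :
    Commute a z := by
  induction z using CliffordAlgebra.induction with
  | algebraMap r => exact (Algebra.commutes r a).symm
  | ι w => refine ((grassmann_iota_mul w a).trans ?_).symm; rw [ha]
  | mul x y hx hy => exact hx.mul_right hy
  | add x y hx hy => exact hx.add_right hy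

/-- Odd elements super-commute with everything. -/
private lemma grassmann_odd_mul {b : ExteriorAlgebra F V}
    (hb : CliffordAlgebra.involute b = -b) (z : ExteriorAlgebra F V) :
    b * z = CliffordAlgebra.involute z * b := by
  induction z using CliffordAlgebra.induction with
  | algebraMap r => rw [AlgHom.commutes]; exact (Algebra.commutes r b).symm
  | ι w =>
      have h := grassmann_iota_mul w b
      rw [hb, neg_mul] at h
      rw [CliffordAlgebra.involute_ι, neg_mul, h, neg_neg]
  | mul x y hx hy => rw [← mul_assoc, hx, mul_assoc, hy, ← mul_assoc, ← map_mul]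
  | add x y hx hy => rw [mul_add, hx, hy, ← add_mul, ← map_add]

private lemma grassmann_involute_prod (l : List V) :
    CliffordAlgebra.involute ((l.map (ExteriorAlgebra.ι F)).prod) =
      (-1 : ExteriorAlgebra F V) ^ l.length * (l.map (ExteriorAlgebra.ι F)).prod := by
  induction l with
  | nil => simp
  | cons v t ih =>
      rcases Nat.even_or_odd t.length with he | ho
      · simp only [List.map_cons, List.prod_cons, map_mul, CliffordAlgebra.involute_ι, ih,
          List.length_cons, he.neg_one_pow, one_mul, he.add_one.neg_one_pow, neg_one_mul,
          neg_mul]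
      · simp only [List.map_cons, List.prod_cons, map_mul, CliffordAlgebra.involute_ι, ih,
          List.length_cons, ho.neg_one_pow, neg_one_mul, ho.add_one.neg_one_pow, one_mul,
          mul_neg, neg_mul, neg_neg]

/-- Nonempty monomials square to zero. -/
private lemma grassmann_monomial_sq (v : V) (n : ExteriorAlgebra F V) :
    (ExteriorAlgebra.ι F v * n) * (ExteriorAlgebra.ι F v * n) = 0 := by
  have h : n * ExteriorAlgebra.ι F v = ExteriorAlgebra.ι F v * CliffordAlgebra.involute n := by
    rw [grassmann_iota_mul v (CliffordAlgebra.involute n), CliffordAlgebra.involute_involute]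
  calc (ExteriorAlgebra.ι F v * n) * (ExteriorAlgebra.ι F v * n)
      = ExteriorAlgebra.ι F v * (n * ExteriorAlgebra.ι F v) * n := by noncomm_ring
    _ = (ExteriorAlgebra.ι F v * ExteriorAlgebra.ι F v) *
          (CliffordAlgebra.involute n * n) := by rw [h]; noncomm_ring
    _ = 0 := by rw [ExteriorAlgebra.ι_sq_zero, zero_mul]

end Aux

/-- (Regev) Over a field of odd prime characteristic `p`, every element of the
augmentation ideal of the Grassmann algebra (the two-sided ideal generated by the image
of `ι`, i.e. the Grassmann algebra without unit) satisfies `x ^ p = 0`. -/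
theorem grassmann_augmentation_ideal_pow_char
    (F : Type*) [Field F] (p : ℕ) [Fact p.Prime] (hp : p ≠ 2) [CharP F p]
    (V : Type*) [AddCommGroup V] [Module F V]
    (x : ExteriorAlgebra F V)
    (hx : x ∈ TwoSidedIdeal.span (Set.range (ExteriorAlgebra.ι F (M := V)))) :
    x ^ p = 0 := by
  haveI : CharP (ExteriorAlgebra F V) p :=
    charP_of_injective_algebraMap (ExteriorAlgebra.algebraMap_leftInverse V).injective p
  have hpprime := Fact.out (p := p.Prime)
  -- the set of nonempty monomials
  set MM : Set (ExteriorAlgebra F V) :=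
    {y | ∃ l : List V, l ≠ [] ∧ y = (l.map (ExteriorAlgebra.ι F)).prod} with hMM
  -- the span of monomials is a left ideal
  have hleft : ∀ z : ExteriorAlgebra F V, ∀ w ∈ Submodule.span F MM,
      z * w ∈ Submodule.span F MM := by
    intro z
    induction z using CliffordAlgebra.induction with
    | algebraMap r =>
        intro w hw
        rw [← Algebra.smul_def]
        exact Submodule.smul_mem _ _ hw
    | ι v =>
        intro w hw
        induction hw using Submodule.span_induction with
        | mem m hm =>
            obtain ⟨l, -, rfl⟩ := hm
            exact Submodule.subset_span ⟨v :: l, by simp, by simp⟩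
        | zero => rw [mul_zero]; exact Submodule.zero_mem _
        | add a b _ _ ha hb => rw [mul_add]; exact Submodule.add_mem _ ha hb
        | smul c a _ ha => rw [mul_smul_comm]; exact Submodule.smul_mem _ _ ha
    | mul a b ha hb => intro w hw; rw [mul_assoc]; exact ha _ (hb _ hw)
    | add a b ha hb => intro w hw; rw [add_mul]; exact Submodule.add_mem _ (ha _ hw) (hb _ hw)
  -- the span of monomials is a right ideal
  have hright : ∀ z : ExteriorAlgebra F V, ∀ w ∈ Submodule.span F MM,
      w * z ∈ Submodule.span F MM := by
    intro z
    induction z using CliffordAlgebra.induction with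
    | algebraMap r =>
        intro w hw
        rw [← Algebra.commutes, ← Algebra.smul_def]
        exact Submodule.smul_mem _ _ hw
    | ι v =>
        intro w hw
        induction hw using Submodule.span_induction with
        | mem m hm =>
            obtain ⟨l, hl, rfl⟩ := hm
            exact Submodule.subset_span ⟨l ++ [v], by simp, by simp⟩
        | zero => rw [zero_mul]; exact Submodule.zero_mem _
        | add a b _ _ ha hb => rw [add_mul]; exact Submodule.add_mem _ ha hb
        | smul c a _ ha => rw [smul_mul_assoc]; exact Submodule.smul_mem _ _ ha
    | mul a b ha hb => intro w hw; rw [← mul_assoc]; exact hb _ (ha _ hw)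
    | add a b ha hb => intro w hw; rw [mul_add]; exact Submodule.add_mem _ (ha _ hw) (hb _ hw)
  -- hence `x` lies in the span of nonempty monomials
  have hxspan : x ∈ Submodule.span F MM := by
    let J : TwoSidedIdeal (ExteriorAlgebra F V) :=
      TwoSidedIdeal.mk' (Submodule.span F MM : Set _)
        (Submodule.zero_mem _)
        (fun ha hb => Submodule.add_mem _ ha hb)
        (fun ha => Submodule.neg_mem _ ha)
        (fun {z w} hw => hleft z w hw)
        (fun {w z} hw => hright z w hw)
    have hsub : Set.range (ExteriorAlgebra.ι F (M := V)) ⊆ J := by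
      rintro - ⟨v, rfl⟩
      simp only [J, TwoSidedIdeal.coe_mk', SetLike.mem_coe]
      exact Submodule.subset_span ⟨[v], by simp, by simp⟩
    have := TwoSidedIdeal.mem_span_iff.mp hx J hsub
    simpa only [J, TwoSidedIdeal.mem_mk', SetLike.mem_coe] using this
  -- main induction: decompose into even part with zero p-th power, plus odd part
  have key : ∀ y ∈ Submodule.span F MM,
      ∃ a b : ExteriorAlgebra F V, y = a + b ∧ CliffordAlgebra.involute a = a ∧
        a ^ p = 0 ∧ CliffordAlgebra.involute b = -b := by
    intro y hy
    induction hy using Submodule.span_induction with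
    | mem m hm =>
        obtain ⟨l, hl, rfl⟩ := hm
        rcases Nat.even_or_odd l.length with he | ho
        · refine ⟨_, 0, (add_zero _).symm, ?_, ?_, by rw [map_zero, neg_zero]⟩
          · rw [grassmann_involute_prod, he.neg_one_pow, one_mul]
          · obtain ⟨v, t, rfl⟩ := List.exists_cons_of_ne_nil hl
            have hsq : ((List.map (ExteriorAlgebra.ι F) (v :: t)).prod) ^ 2 = 0 := by
              rw [pow_two, List.map_cons, List.prod_cons]
              exact grassmann_monomial_sq v _
            calc ((List.map (ExteriorAlgebra.ι F) (v :: t)).prod) ^ p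
                = ((List.map (ExteriorAlgebra.ι F) (v :: t)).prod) ^ 2 *
                  ((List.map (ExteriorAlgebra.ι F) (v :: t)).prod) ^ (p - 2) := by
                  rw [← pow_add]; congr 1; have := hpprime.two_le; omega
              _ = 0 := by rw [hsq, zero_mul]
        · refine ⟨0, _, (zero_add _).symm, map_zero _, ?_, ?_⟩
          · exact zero_pow hpprime.ne_zero
          · rw [grassmann_involute_prod, ho.neg_one_pow, neg_one_mul]
    | zero =>
        exact ⟨0, 0, by rw [add_zero], map_zero _, zero_pow hpprime.ne_zero,
          by rw [map_zero, neg_zero]⟩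
    | add u w _ _ hu hw =>
        obtain ⟨a, b, rfl, hai, hap, hbi⟩ := hu
        obtain ⟨a', b', rfl, hai', hap', hbi'⟩ := hw
        refine ⟨a + a', b + b', by abel, by rw [map_add, hai, hai'], ?_,
          by rw [map_add, hbi, hbi', neg_add]⟩
        rw [add_pow_char_of_commute _ (grassmann_even_comm hai a'), hap, hap', add_zero]
    | smul c u _ hu =>
        obtain ⟨a, b, rfl, hai, hap, hbi⟩ := hu
        refine ⟨c • a, c • b, by rw [smul_add], by rw [map_smul, hai], ?_,
          by rw [map_smul, hbi, smul_neg]⟩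
        rw [smul_pow, hap, smul_zero]
  obtain ⟨a, b, rfl, hai, hap, hbi⟩ := key x hxspan
  -- odd part squares to zero
  have hb2 : b * b = 0 := by
    have h := grassmann_odd_mul hbi b
    rw [hbi, neg_mul] at h
    have h2 : (2 : F) • (b * b) = 0 := by
      rw [two_smul]
      nth_rewrite 2 [h]
      abel
    have h2ne : (2 : F) ≠ 0 := by
      intro hc
      have := (CharP.cast_eq_zero_iff F p 2).mp hc
      exact hp ((Nat.prime_dvd_prime_iff_eq hpprime Nat.prime_two).mp this)
    exact (smul_eq_zero.mp h2).resolve_left h2ne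
  -- binomial expansion
  rw [(grassmann_even_comm hai b).add_pow]
  apply Finset.sum_eq_zero
  intro k hk
  rw [Finset.mem_range] at hk
  rcases eq_or_lt_of_le (Nat.lt_succ_iff.mp hk) with hkp | hkp
  · subst hkp
    rw [hap, zero_mul, zero_mul]
  · rcases eq_or_lt_of_le (Nat.one_le_iff_ne_zero.mpr (by omega : p - k ≠ 0)) with h1 | h1
    · -- p - k = 1, so the binomial coefficient is divisible by p
      have hk' : k = p - 1 := by omega
      subst hk'
      have : (p.choose (p - 1) : ExteriorAlgebra F V) = 0 := by
        rw [Nat.choose_symm hpprime.one_le, Nat.choose_one_right]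
        exact CharP.cast_eq_zero _ p
      rw [this, mul_zero]
    · -- p - k ≥ 2, so b ^ (p - k) = 0
      have : b ^ (p - k) = (b * b) * b ^ (p - k - 2) := by
        rw [← pow_two, ← pow_add]; congr 1; omega
      rw [this, hb2, zero_mul, mul_zero, zero_mul]
end

section
/- Let F be a field of odd prime characteristic p, V an F-vector space, n ≥ 1, and v : Fin (2n) → V any family of vectors; let a = ι(v₀)ι(v₁)⋯ι(v_{2n−1}) ∈ Λ(V) and f ∈ F. If α, β, k ∈ ℕ satisfy α = β + p·k (so that α ≡ β mod p), then (f·1 + a)^α = f^{p·k} · (f·1 + a)^β in Λ(V). -/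
/-- Over a field of odd prime characteristic `p`, if `a` is a product of an even
(positive) number of Grassmann generators, `f` is a scalar, and `α = β + p·k`, then
`(f·1 + a) ^ α = f^{p·k} · (f·1 + a) ^ β` in Λ(V). -/
theorem grassmann_scalar_plus_even_pow_congr_mod_char
    (F : Type*) [Field F] (p : ℕ) [Fact p.Prime] (hp : p ≠ 2) [CharP F p]
    (V : Type*) [AddCommGroup V] [Module F V]
    (n : ℕ) (hn : 1 ≤ n) (v : Fin (2 * n) → V) (f : F)
    (a : ExteriorAlgebra F V)
    (ha : a = (List.ofFn fun i => ExteriorAlgebra.ι F (v i)).prod)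
    (α β k : ℕ) (hαβ : α = β + p * k) :
    (algebraMap F (ExteriorAlgebra F V) f + a) ^ α
      = algebraMap F (ExteriorAlgebra F V) (f ^ (p * k))
          * (algebraMap F (ExteriorAlgebra F V) f + a) ^ β := by
  have hp' : 0 < p := (Fact.out : p.Prime).pos
  haveI : CharP (ExteriorAlgebra F V) p :=
    charP_of_injective_algebraMap (ExteriorAlgebra.algebraMap_leftInverse V).injective p
  set A := algebraMap F (ExteriorAlgebra F V) f with hA
  -- a * a = 0
  have h2n : 0 < 2 * n := by omega
  have hsq : a * a = 0 := by
    have key : ExteriorAlgebra.ιMulti F (2 * n + 2 * n) (Fin.append v v) = a * a := by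
      rw [ExteriorAlgebra.ιMulti_apply, List.ofFn_add, List.prod_append, ha]
      simp only [Fin.append_left, Fin.append_left', Fin.append_right]
    rw [← key]
    refine AlternatingMap.map_eq_zero_of_eq _ _
      (i := Fin.castAdd (2 * n) ⟨0, h2n⟩) (j := Fin.natAdd (2 * n) ⟨0, h2n⟩) ?_ ?_
    · rw [Fin.append_left, Fin.append_right]
    · intro h
      have := congrArg Fin.val h
      simp at this
      omega
  have haz : ∀ j, 2 ≤ j → a ^ j = 0 := by
    intro j hj
    obtain ⟨m, rfl⟩ := Nat.exists_eq_add_of_le hj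
    rw [pow_add, pow_two, hsq, zero_mul]
  have hcomm : Commute A a := Algebra.commutes f a
  -- (A + a) ^ p = A ^ p
  have hAp : (A + a) ^ p = A ^ p := by
    rw [hcomm.add_pow, Finset.sum_range_succ]
    have hz : ∀ m ∈ Finset.range p,
        A ^ m * a ^ (p - m) * (p.choose m : ExteriorAlgebra F V) = 0 := by
      intro m hm
      rw [Finset.mem_range] at hm
      have hcase : m = p - 1 ∨ m < p - 1 := by omega
      rcases hcase with h | h
      · have hch : p.choose m = p := by
          subst h
          obtain ⟨q, rfl⟩ := Nat.exists_eq_succ_of_ne_zero hp'.ne'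
          simp
        rw [hch, CharP.cast_eq_zero (ExteriorAlgebra F V) p, mul_zero]
      · have : a ^ (p - m) = 0 := haz _ (by omega)
        rw [this, mul_zero, zero_mul]
    rw [Finset.sum_eq_zero hz, zero_add]
    simp
  calc (A + a) ^ α = (A + a) ^ β * ((A + a) ^ p) ^ k := by
        rw [hαβ, pow_add, pow_mul]
    _ = (A + a) ^ β * A ^ (p * k) := by rw [hAp, pow_mul]
    _ = algebraMap F (ExteriorAlgebra F V) (f ^ (p * k)) * (A + a) ^ β := by
        rw [hA, ← map_pow]
        exact (Algebra.commutes _ _).symm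
end

section
/- Let l, r ∈ ℕ, let F be a field whose characteristic is either 0 or an odd prime p with p > r, let V be an F-vector space, and let v₀, v₁, …, v_{2l} be linearly independent vectors of V. Set s = ι(v₀) + ι(v₁)ι(v₂) + ι(v₃)ι(v₄) + ⋯ + ι(v_{2l−1})ι(v_{2l}) ∈ Λ(V). Then s^r = 0 if and only if r ≥ l + 2. -/
open Finset in
lemma sq_zero_sum_pow_mul_prod {A : Type*} [CommRing A] (b : ℕ → A)
    (hb : ∀ i, b i * b i = 0) (n : ℕ) :
    ∀ (m : ℕ) (S : Finset ℕ), S ⊆ Finset.range n → (Finset.range n \ S).card = m →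
      (∑ i ∈ Finset.range n, b i) ^ m * ∏ i ∈ S, b i
        = m.factorial • ∏ i ∈ Finset.range n, b i := by
  intro m
  induction m with
  | zero =>
    intro S hS hcard
    have hSeq : S = Finset.range n :=
      Finset.Subset.antisymm hS
        (Finset.sdiff_eq_empty_iff_subset.mp (Finset.card_eq_zero.mp hcard))
    simp [hSeq]
  | succ m ih =>
    intro S hS hcard
    have hzero : ∀ j ∈ S, b j * ∏ i ∈ S, b i = 0 := fun j hj => by
      rw [← Finset.mul_prod_erase S b hj, ← mul_assoc, hb, zero_mul]
    have step : (∑ i ∈ Finset.range n, b i) * ∏ i ∈ S, b i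
        = ∑ j ∈ Finset.range n \ S, ∏ i ∈ insert j S, b i := by
      rw [Finset.sum_mul, ← Finset.sum_sdiff hS]
      rw [Finset.sum_eq_zero hzero, add_zero]
      refine Finset.sum_congr rfl fun j hj => ?_
      rw [Finset.prod_insert (Finset.mem_sdiff.mp hj).2]
    have hmain : (∑ i ∈ Finset.range n, b i) ^ (m+1) * ∏ i ∈ S, b i
        = (∑ i ∈ Finset.range n, b i) ^ m * ((∑ i ∈ Finset.range n, b i) * ∏ i ∈ S, b i) := by
      ring
    rw [hmain, step, Finset.mul_sum]
    have hcongr : ∀ j ∈ Finset.range n \ S,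
        (∑ i ∈ Finset.range n, b i) ^ m * ∏ i ∈ insert j S, b i
          = m.factorial • ∏ i ∈ Finset.range n, b i := by
      intro j hj
      obtain ⟨hjn, hjS⟩ := Finset.mem_sdiff.mp hj
      refine ih (insert j S) (Finset.insert_subset hjn hS) ?_
      rw [Finset.sdiff_insert, Finset.card_erase_of_mem hj, hcard]; omega
    rw [Finset.sum_congr rfl hcongr, Finset.sum_const, hcard, smul_smul, Nat.factorial_succ]

lemma sq_zero_sum_pow_eq_zero {A : Type*} [CommRing A] (b : ℕ → A)
    (hb : ∀ i, b i * b i = 0) (n m : ℕ) (h : n < m) :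
    (∑ i ∈ Finset.range n, b i) ^ m = 0 := by
  have hn : (∑ i ∈ Finset.range n, b i) ^ n = n.factorial • ∏ i ∈ Finset.range n, b i := by
    simpa using sq_zero_sum_pow_mul_prod b hb n n ∅ (Finset.empty_subset _) (by simp)
  have hn1 : (∑ i ∈ Finset.range n, b i) ^ (n + 1) = 0 := by
    rw [pow_succ, hn, smul_mul_assoc, Finset.mul_sum]
    rw [Finset.sum_eq_zero, smul_zero]
    intro j hj
    rw [mul_comm, ← Finset.mul_prod_erase _ b hj, ← mul_assoc, hb, zero_mul]
  obtain ⟨k, hk⟩ : ∃ k, m = (n + 1) + k := ⟨m - (n+1), by omega⟩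
  rw [hk, pow_add, hn1, zero_mul]

lemma exists_functional_iMulti_eq_one (F : Type*) [Field F]
    (V : Type*) [AddCommGroup V] [Module F V]
    (n : ℕ) (v : Fin n → V) (hv : LinearIndependent F v) :
    ∃ φ : ExteriorAlgebra F V →ₗ[F] F, φ (ExteriorAlgebra.ιMulti F n v) = 1 := by
  classical
  have hinj : Function.Injective v := hv.injective
  have hvset : LinearIndepOn F id (Set.range v) := by
    rw [linearIndepOn_id_range_iff hinj]
    exact hv
  let B : Module.Basis _ F V := Module.Basis.extend hvset
  let idx : Fin n → ↥(hvset.extend (Set.subset_univ _)) :=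
    fun i => ⟨v i, hvset.subset_extend _ ⟨i, rfl⟩⟩
  have hidx : ∀ i, B (idx i) = v i := fun i => Module.Basis.extend_apply_self hvset (idx i)
  have hidxinj : Function.Injective idx := fun i j hij => by
    apply hinj
    have := congrArg Subtype.val hij
    simpa [idx] using this
  let c : V →ₗ[F] (Fin n → F) := LinearMap.pi fun i => B.coord (idx i)
  let g : V [⋀^Fin n]→ₗ[F] F := Matrix.detRowAlternating.compLinearMap c
  have hg : g v = 1 := by
    have hmat : (Matrix.of fun i j => c (v i) j) = (1 : Matrix (Fin n) (Fin n) F) := by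
      ext i j
      have : c (v i) j = B.repr (B (idx i)) (idx j) := by simp [c, hidx]
      rw [Matrix.of_apply, this, B.repr_self, Finsupp.single_apply, Matrix.one_apply]
      by_cases h : i = j
      · simp [h]
      · rw [if_neg (fun hh => h (hidxinj hh)), if_neg h]
    show Matrix.detRowAlternating (fun i => c (v i)) = 1
    have : (fun i => c (v i)) = (1 : Matrix (Fin n) (Fin n) F) := hmat
    rw [this]
    exact Matrix.det_one
  refine ⟨ExteriorAlgebra.liftAlternating (Pi.single n g), ?_⟩
  rw [ExteriorAlgebra.liftAlternating_apply_ιMulti, Pi.single_eq_same, hg]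

lemma grassmann_list_step {E : Type*} [Monoid E] (n : ℕ) (f : ℕ → E) :
    (List.ofFn fun i : Fin (n+2) => f ↑i).prod
      = (List.ofFn fun i : Fin n => f ↑i).prod * f n * f (n+1) := by
  rw [List.ofFn_succ' (fun i : Fin (n+2) => f ↑i), List.prod_concat]
  simp only [Function.comp, Fin.coe_castSucc, Fin.val_last]
  rw [List.ofFn_succ' (fun i : Fin (n+1) => f ↑i), List.prod_concat]
  simp only [Function.comp, Fin.coe_castSucc, Fin.val_last]

section SignLemmas

variable {R : Type*} {M : Type*} [CommRing R] [AddCommGroup M] [Module R M]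

lemma grassmann_swap (x y : M) :
    ExteriorAlgebra.ι R x * ExteriorAlgebra.ι R y
      = -(ExteriorAlgebra.ι R y * ExteriorAlgebra.ι R x) :=
  eq_neg_of_add_eq_zero_left (ExteriorAlgebra.ι_add_mul_swap x y)

lemma grassmann_comm1 (x y z : M) :
    ExteriorAlgebra.ι R x * (ExteriorAlgebra.ι R y * ExteriorAlgebra.ι R z)
      = (ExteriorAlgebra.ι R y * ExteriorAlgebra.ι R z) * ExteriorAlgebra.ι R x := by
  set p := ExteriorAlgebra.ι R x
  set q := ExteriorAlgebra.ι R y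
  set w := ExteriorAlgebra.ι R z
  calc p * (q * w) = (p * q) * w := (mul_assoc _ _ _).symm
    _ = -(q * p) * w := by rw [grassmann_swap x y]
    _ = -(q * (p * w)) := by rw [neg_mul, mul_assoc]
    _ = -(q * -(w * p)) := by rw [grassmann_swap x z]
    _ = q * (w * p) := by rw [mul_neg, neg_neg]
    _ = (q * w) * p := (mul_assoc _ _ _).symm

lemma grassmann_comm2 (w x y z : M) :
    (ExteriorAlgebra.ι R w * ExteriorAlgebra.ι R x)
        * (ExteriorAlgebra.ι R y * ExteriorAlgebra.ι R z)
      = (ExteriorAlgebra.ι R y * ExteriorAlgebra.ι R z)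
        * (ExteriorAlgebra.ι R w * ExteriorAlgebra.ι R x) := by
  set p := ExteriorAlgebra.ι R w
  set q := ExteriorAlgebra.ι R x
  set C := ExteriorAlgebra.ι R y * ExteriorAlgebra.ι R z with hC
  calc (p * q) * C = p * (q * C) := mul_assoc _ _ _
    _ = p * (C * q) := by rw [hC, grassmann_comm1 x y z]
    _ = (p * C) * q := (mul_assoc _ _ _).symm
    _ = (C * p) * q := by rw [hC, grassmann_comm1 w y z]
    _ = C * (p * q) := mul_assoc _ _ _

lemma grassmann_sq_zero (x y : M) :
    (ExteriorAlgebra.ι R x * ExteriorAlgebra.ι R y)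
      * (ExteriorAlgebra.ι R x * ExteriorAlgebra.ι R y) = 0 := by
  set p := ExteriorAlgebra.ι R x
  set q := ExteriorAlgebra.ι R y
  calc (p * q) * (p * q) = p * (q * (p * q)) := mul_assoc _ _ _
    _ = p * ((q * p) * q) := by rw [mul_assoc]
    _ = p * (-(p * q) * q) := by rw [grassmann_swap y x]
    _ = -(p * (p * (q * q))) := by rw [neg_mul, mul_neg, mul_assoc]
    _ = 0 := by
        have : q * q = 0 := ExteriorAlgebra.ι_sq_zero y
        rw [this, mul_zero, mul_zero, neg_zero]

end SignLemmas

set_option maxHeartbeats 1000000 in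
set_option synthInstance.maxHeartbeats 400000 in
/-- Let `F` have characteristic `0` or an odd prime characteristic `p > r`, and let
`v₀, …, v_{2l}` be linearly independent vectors. For
`s = ι(v₀) + ι(v₁)ι(v₂) + ⋯ + ι(v_{2l−1})ι(v_{2l})` in Λ(V) one has
`s ^ r = 0` if and only if `r ≥ l + 2`. -/
theorem grassmann_odd_sum_pow_eq_zero_iff
    (l r : ℕ) (F : Type*) [Field F]
    (hchar : CharP F 0 ∨ ∃ p : ℕ, p.Prime ∧ p ≠ 2 ∧ CharP F p ∧ r < p)
    (V : Type*) [AddCommGroup V] [Module F V]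
    (v : Fin (2 * l + 1) → V) (hv : LinearIndependent F v)
    (s : ExteriorAlgebra F V)
    (hs : s = ExteriorAlgebra.ι F (v 0)
        + ∑ i : Fin l,
            ExteriorAlgebra.ι F (v ⟨2 * (i : ℕ) + 1, by omega⟩)
              * ExteriorAlgebra.ι F (v ⟨2 * (i : ℕ) + 2, by omega⟩)) :
    s ^ r = 0 ↔ l + 2 ≤ r := by
  classical
  set vn : ℕ → V := fun i => if h : i < 2*l+1 then v ⟨i, h⟩ else 0 with hvn
  set aa : ExteriorAlgebra F V := ExteriorAlgebra.ι F (vn 0) with haa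
  set bbn : ℕ → ExteriorAlgebra F V :=
    fun i => ExteriorAlgebra.ι F (vn (2*i+1)) * ExteriorAlgebra.ι F (vn (2*i+2)) with hbbn
  set S : Set (ExteriorAlgebra F V) := insert aa (Set.range bbn) with hS
  have hcomm : ∀ x ∈ S, ∀ y ∈ S, x * y = y * x := by
    rintro x hx y hy
    rw [hS, Set.mem_insert_iff, Set.mem_range] at hx hy
    rcases hx with rfl | ⟨i, rfl⟩ <;> rcases hy with rfl | ⟨j, rfl⟩
    · rfl
    · show aa * bbn j = bbn j * aa
      rw [haa, hbbn]
      exact grassmann_comm1 _ _ _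
    · show bbn i * aa = aa * bbn i
      rw [haa, hbbn]
      exact (grassmann_comm1 _ _ _).symm
    · show bbn i * bbn j = bbn j * bbn i
      rw [hbbn]
      exact grassmann_comm2 _ _ _ _
  letI : CommRing ↥(Algebra.adjoin F S) := Algebra.adjoinCommRingOfComm F hcomm
  set a' : ↥(Algebra.adjoin F S) := ⟨aa, Algebra.subset_adjoin (Set.mem_insert _ _)⟩
    with ha'def
  set b' : ℕ → ↥(Algebra.adjoin F S) :=
    fun i => ⟨bbn i, Algebra.subset_adjoin (Set.mem_insert_of_mem _ ⟨i, rfl⟩)⟩ with hb'def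
  have hb' : ∀ i, b' i * b' i = 0 := fun i => Subtype.ext (grassmann_sq_zero _ _)
  have ha' : a' * a' = 0 := Subtype.ext (by
    show aa * aa = 0
    rw [haa, ExteriorAlgebra.ι_sq_zero])
  set s' : ↥(Algebra.adjoin F S) := a' + ∑ i ∈ Finset.range l, b' i with hs'def
  set val := Subalgebra.val (Algebra.adjoin F S) with hval
  have hva : val a' = aa := rfl
  -- s is the image of s'
  have hcoe_s : val s' = s := by
    rw [hs, hs'def, map_add, map_sum]
    refine congrArg₂ (· + ·) ?_ ?_
    · rw [hva, haa]
      congr 1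
    · rw [← Fin.sum_univ_eq_sum_range (fun i => val (b' i)) l]
      refine Finset.sum_congr rfl fun i _ => ?_
      show bbn ↑i = _
      simp only [hbbn, hvn]
      rw [dif_pos (by omega : 2*(i:ℕ)+1 < 2*l+1), dif_pos (by omega : 2*(i:ℕ)+2 < 2*l+1)]
  have hzero_iff : ∀ k : ℕ, (s ^ k = 0 ↔ s' ^ k = 0) := by
    intro k
    rw [← hcoe_s, ← map_pow]
    rw [show val (s' ^ k) = ((s' ^ k : ↥(Algebra.adjoin F S)) : ExteriorAlgebra F V) from rfl]
    exact ZeroMemClass.coe_eq_zero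
  -- binomial splitting
  have hapow : ∀ j, 2 ≤ j → a' ^ j = 0 := by
    intro j hj
    obtain ⟨t, rfl⟩ : ∃ t, j = 2 + t := ⟨j - 2, by omega⟩
    rw [pow_add, pow_two, ha', zero_mul]
  have hsplit : ∀ k, 1 ≤ k → s' ^ k = (∑ i ∈ Finset.range l, b' i) ^ k
      + k • (a' * (∑ i ∈ Finset.range l, b' i) ^ (k-1)) := by
    intro k hk
    rw [hs'def, add_pow]
    rw [show Finset.range (k+1) = Finset.Ico 0 (k+1) from Finset.range_eq_Ico (k+1),
      ← Finset.sum_Ico_consecutive _ (by omega : 0 ≤ 2) (by omega : 2 ≤ k + 1),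
      show Finset.Ico 2 (k+1) = Finset.Ico 2 (k+1) from rfl]
    have h2' : ∑ j ∈ Finset.Ico 2 (k+1),
        a' ^ j * (∑ i ∈ Finset.range l, b' i) ^ (k - j)
          * ((k.choose j : ℕ) : ↥(Algebra.adjoin F S)) = 0 :=
      Finset.sum_eq_zero fun j hj => by
        rw [hapow j (Finset.mem_Ico.mp hj).1, zero_mul, zero_mul]
    rw [h2', add_zero]
    rw [show Finset.Ico 0 2 = Finset.range 2 from (Finset.range_eq_Ico 2).symm,
      Finset.sum_range_succ, Finset.sum_range_one]
    simp only [pow_zero, pow_one, one_mul, Nat.choose_zero_right, Nat.choose_one_right,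
      Nat.cast_one, mul_one, Nat.sub_zero]
    rw [nsmul_eq_mul]
    ring
  have hBtop : ∀ m, l < m → (∑ i ∈ Finset.range l, b' i) ^ m = 0 := fun m hm =>
    sq_zero_sum_pow_eq_zero b' hb' l m hm
  have hBl : (∑ i ∈ Finset.range l, b' i) ^ l
      = l.factorial • ∏ i ∈ Finset.range l, b' i := by
    have := sq_zero_sum_pow_mul_prod b' hb' l l ∅ (Finset.empty_subset _)
      (by rw [Finset.sdiff_empty, Finset.card_range])
    rwa [Finset.prod_empty, mul_one] at this
  -- factorial is nonzero in F
  have hfac : (r.factorial : F) ≠ 0 := by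
    rcases hchar with h0 | ⟨p, hp, -, hpc, hrp⟩
    · intro h
      rw [CharP.cast_eq_zero_iff F 0] at h
      exact r.factorial_ne_zero (by simpa using h)
    · intro h
      rw [CharP.cast_eq_zero_iff F p] at h
      exact absurd ((Nat.Prime.dvd_factorial hp).mp h) (by omega)
  -- identification of the top product with ιMulti
  have hlist : ∀ m, m ≤ l → aa * val (∏ i ∈ Finset.range m, b' i)
      = (List.ofFn fun i : Fin (2*m+1) => ExteriorAlgebra.ι F (vn ↑i)).prod := by
    intro m
    induction m with
    | zero =>
      intro _
      rw [Finset.prod_range_zero, map_one, mul_one]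
      simp [List.ofFn_succ, haa]
    | succ m ih =>
      intro hm
      rw [Finset.prod_range_succ, map_mul]
      have hbm : val (b' m) = bbn m := rfl
      rw [hbm, ← mul_assoc, ih (by omega)]
      have hnat : 2*(m+1)+1 = 2*m+1+2 := by ring
      simp only [hnat, Fin.coe_cast]
      rw [grassmann_list_step (2*m+1) (fun i => ExteriorAlgebra.ι F (vn i))]
      rw [hbbn, ← mul_assoc]
  have hfull : aa * val (∏ i ∈ Finset.range l, b' i)
      = ExteriorAlgebra.ιMulti F (2*l+1) v := by
    rw [hlist l le_rfl, ExteriorAlgebra.ιMulti_apply]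
    congr 1
    refine congrArg List.ofFn (funext fun i => ?_)
    have hveq : vn ↑i = v i := by
      show (if h : (i:ℕ) < 2*l+1 then v ⟨↑i, h⟩ else 0) = v i
      rw [dif_pos i.isLt]
    rw [hveq]
  have hNZ : r.factorial • (a' * ∏ i ∈ Finset.range l, b' i) ≠ 0 := by
    intro h0
    obtain ⟨φ, hφ⟩ := exists_functional_iMulti_eq_one F V (2*l+1) v hv
    have hval0 : val (r.factorial • (a' * ∏ i ∈ Finset.range l, b' i)) = 0 := by
      rw [h0, map_zero]
    rw [map_nsmul, map_mul, hva, hfull] at hval0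
    have := congrArg φ hval0
    rw [map_nsmul, hφ, map_zero] at this
    apply hfac
    rw [← this]
    simp
  constructor
  · intro h0
    by_contra hlt
    push_neg at hlt
    rcases Nat.eq_zero_or_pos r with rfl | hr1
    · rw [pow_zero] at h0
      exact one_ne_zero ((ExteriorAlgebra.algebraMap_eq_zero_iff (R := F) (M := V) 1).mp
        (by rw [map_one]; exact h0))
    · have h0' : s' ^ r = 0 := (hzero_iff r).mp h0
      by_cases hcase : r ≤ l
      · have hIco : Finset.Ico r l ⊆ Finset.range l := fun x hx =>
          Finset.mem_range.mpr (Finset.mem_Ico.mp hx).2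
        have hsd : Finset.range l \ Finset.Ico r l = Finset.range r := by
          ext x
          simp only [Finset.mem_sdiff, Finset.mem_range, Finset.mem_Ico, not_and, not_lt]
          omega
        have hB := sq_zero_sum_pow_mul_prod b' hb' l r (Finset.Ico r l) hIco
          (by rw [hsd, Finset.card_range])
        have hexp : s' ^ r * ((∏ i ∈ Finset.Ico r l, b' i) * a')
            = r.factorial • (a' * ∏ i ∈ Finset.range l, b' i) := by
          rw [hsplit r hr1, add_mul]
          have t2 : (r • (a' * (∑ i ∈ Finset.range l, b' i) ^ (r-1)))
              * ((∏ i ∈ Finset.Ico r l, b' i) * a') = 0 := by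
            have hre : (a' * (∑ i ∈ Finset.range l, b' i) ^ (r-1))
                * ((∏ i ∈ Finset.Ico r l, b' i) * a')
                = (a' * a') * ((∑ i ∈ Finset.range l, b' i) ^ (r-1)
                    * ∏ i ∈ Finset.Ico r l, b' i) := by ring
            rw [smul_mul_assoc, hre, ha', zero_mul, smul_zero]
          have t1 : (∑ i ∈ Finset.range l, b' i) ^ r
              * ((∏ i ∈ Finset.Ico r l, b' i) * a')
              = r.factorial • (a' * ∏ i ∈ Finset.range l, b' i) := by
            rw [← mul_assoc, hB, smul_mul_assoc,
              mul_comm (∏ i ∈ Finset.range l, b' i) a']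
          rw [t1, t2, add_zero]
        rw [h0', zero_mul] at hexp
        exact hNZ hexp.symm
      · have hrl : r = l + 1 := by omega
        have hform : s' ^ r = r.factorial • (a' * ∏ i ∈ Finset.range l, b' i) := by
          rw [hsplit r hr1, hrl]
          rw [hBtop (l+1) (by omega)]
          have hsub : l + 1 - 1 = l := by omega
          rw [hsub, hBl, zero_add, mul_smul_comm, smul_smul, Nat.factorial_succ]
        rw [hform] at h0'
        exact hNZ h0'
  · intro hge
    refine (hzero_iff r).mpr ?_
    rw [hsplit r (by omega), hBtop r (by omega), hBtop (r-1) (by omega),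
      mul_zero, smul_zero, add_zero]
end

section
/- Let n, k ∈ ℕ and j ≥ 1. The number of monomials of total degree n in k commuting variables in which each variable occurs with degree strictly less than j, i.e. the cardinality of { f : Fin k → ℕ | (∀ i, f i < j) and Σ_i f i = n }, equals κ(n, j, k) = Σ_{r + s·j = n, r,s ≥ 0} (−1)^s · C(k + r − 1, r) · C(k, s), where C denotes the binomial coefficient (the identity is an equality of integers). -/
open PowerSeries Finset

noncomputable def gs (j : ℕ) : ℤ⟦X⟧ := ∑ i ∈ Finset.range j, PowerSeries.X ^ i

lemma coeff_gs (j m : ℕ) : PowerSeries.coeff m (gs j) = if m < j then 1 else 0 := by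
  unfold gs
  rw [map_sum]
  simp only [PowerSeries.coeff_X_pow]
  rw [Finset.sum_ite_eq (Finset.range j) m (fun _ => (1:ℤ))]
  simp [Finset.mem_range]

lemma card_eq_coeff (n k j : ℕ) :
    (((Fintype.piFinset fun _ : Fin k => Finset.range j).filter
        fun f => ∑ i, f i = n).card : ℤ)
    = PowerSeries.coeff n ((gs j) ^ k) := by
  classical
  have h : ((gs j) ^ k) = ∏ _i : Fin k, gs j := by simp
  rw [h, PowerSeries.coeff_prod]
  have : ∀ l ∈ Finset.finsuppAntidiag (Finset.univ : Finset (Fin k)) n,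
      (∏ i, PowerSeries.coeff (l i) (gs j)) = if ∀ i, l i < j then 1 else 0 := by
    intro l _
    simp only [coeff_gs]
    rw [Finset.prod_boole]
    simp
  rw [Finset.sum_congr rfl this, Finset.sum_boole]
  norm_cast
  apply Finset.card_bij' (fun (f : Fin k → ℕ) _ => Finsupp.equivFunOnFinite.symm f)
      (fun (l : Fin k →₀ ℕ) _ => ⇑l)
  · intro f hf
    simp only [Finset.mem_filter, Fintype.mem_piFinset, Finset.mem_range] at hf
    simp only [Finset.mem_filter, Finset.mem_finsuppAntidiag]
    refine ⟨⟨?_, Finset.subset_univ _⟩, ?_⟩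
    · simpa using hf.2
    · intro i; simpa using hf.1 i
  · intro l hl
    simp only [Finset.mem_filter, Finset.mem_finsuppAntidiag] at hl ⊢
    constructor
    · simp only [Fintype.mem_piFinset, Finset.mem_range]
      exact hl.2
    · exact hl.1.1
  · intro f _; rfl
  · intro l _; exact Finsupp.equivFunOnFinite.symm_apply_apply l

lemma coeff_inv_osp (k b : ℕ) :
    PowerSeries.coeff b ((PowerSeries.invOneSubPow ℤ k).val) = ((k + b - 1).choose b : ℤ) := by
  cases k with
  | zero =>
    rw [PowerSeries.invOneSubPow_zero]
    cases b with
    | zero => simp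
    | succ b =>
      simp [PowerSeries.coeff_one, Nat.choose_eq_zero_of_lt (by omega : b + 1 - 1 < b + 1)]
  | succ d =>
    rw [PowerSeries.invOneSubPow_val_succ_eq_mk_add_choose, PowerSeries.coeff_mk]
    congr 1
    have h1 : d + 1 + b - 1 = d + b := by omega
    rw [h1]
    have := Nat.choose_symm (Nat.le_add_left b d) (n := d + b)
    simpa using this

lemma coeff_gs_pow (n k j : ℕ) :
    PowerSeries.coeff n ((gs j) ^ k)
    = ∑ m ∈ Finset.range (k + 1), (-1 : ℤ) ^ m * k.choose m *
        (if j * m ≤ n then ((k + (n - j * m) - 1).choose (n - j * m) : ℤ) else 0) := by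
  have h1 : gs j * (1 - PowerSeries.X) = 1 - PowerSeries.X ^ j := by
    have h := geom_sum_mul (PowerSeries.X : ℤ⟦X⟧) j
    unfold gs
    linear_combination -h
  have hu : (1 - PowerSeries.X : ℤ⟦X⟧) ^ k * (PowerSeries.invOneSubPow ℤ k).val = 1 := by
    rw [← PowerSeries.invOneSubPow_inv_eq_one_sub_pow]
    exact (PowerSeries.invOneSubPow ℤ k).inv_val
  have h2 : (gs j) ^ k = (1 - PowerSeries.X ^ j) ^ k * (PowerSeries.invOneSubPow ℤ k).val := by
    conv_lhs => rw [← mul_one ((gs j) ^ k), ← hu, ← mul_assoc, ← mul_pow, h1]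
  have h3 : (1 - PowerSeries.X ^ j : ℤ⟦X⟧) ^ k
      = ∑ m ∈ Finset.range (k + 1),
          PowerSeries.C (R := ℤ) ((-1 : ℤ) ^ m * k.choose m) * PowerSeries.X ^ (j * m) := by
    rw [sub_eq_neg_add, add_pow]
    refine Finset.sum_congr rfl fun m _ => ?_
    rw [neg_pow, ← pow_mul, one_pow, mul_one, map_mul, map_pow, map_neg, map_one, map_natCast]
    ring
  rw [h2, h3, Finset.sum_mul, map_sum]
  refine Finset.sum_congr rfl fun m _ => ?_
  rw [mul_assoc, PowerSeries.coeff_C_mul, PowerSeries.coeff_X_pow_mul']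
  split_ifs with h
  · rw [coeff_inv_osp]
  · ring


/-- The number of monomials of total degree `n` in `k` commuting variables in which each
variable occurs with degree `< j` equals
`κ(n,j,k) = Σ_{r+s·j=n} (−1)^s C(k+r−1, r) C(k, s)`. -/
theorem count_bounded_degree_monomials
    (n k j : ℕ) (hj : 1 ≤ j) :
    (((Fintype.piFinset fun _ : Fin k => Finset.range j).filter
        fun f => ∑ i, f i = n).card : ℤ)
      = ∑ p ∈ (Finset.range (n + 1) ×ˢ Finset.range (n + 1)).filter
            (fun p => p.1 + p.2 * j = n),
          (-1 : ℤ) ^ p.2 * (k + p.1 - 1).choose p.1 * k.choose p.2 := by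
  rw [card_eq_coeff, coeff_gs_pow]
  have hR : ∑ p ∈ (Finset.range (n + 1) ×ˢ Finset.range (n + 1)).filter
        (fun p => p.1 + p.2 * j = n),
      (-1 : ℤ) ^ p.2 * (k + p.1 - 1).choose p.1 * k.choose p.2
    = ∑ s ∈ (Finset.range (n + 1)).filter (fun s => s * j ≤ n),
      (-1 : ℤ) ^ s * (k + (n - s * j) - 1).choose (n - s * j) * k.choose s := by
    apply Finset.sum_nbij' (fun p => p.2) (fun s => (n - s * j, s))
    · intro p hp
      simp only [Finset.mem_filter, Finset.mem_product, Finset.mem_range] at hp ⊢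
      omega
    · intro s hs
      simp only [Finset.mem_filter, Finset.mem_product, Finset.mem_range] at hs ⊢
      omega
    · intro p hp
      simp only [Finset.mem_filter, Finset.mem_product, Finset.mem_range] at hp
      have h1 : n - p.2 * j = p.1 := by omega
      simp [h1]
    · intro s hs; rfl
    · intro p hp
      simp only [Finset.mem_filter, Finset.mem_product, Finset.mem_range] at hp
      have h1 : n - p.2 * j = p.1 := by omega
      simp [h1]
  rw [hR, Finset.sum_filter]
  rw [Finset.sum_subset (Finset.range_subset_range.2 (by omega : k + 1 ≤ n + k + 1))
      (fun x _ hx => by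
        simp only [Finset.mem_range, not_lt] at hx
        simp [Nat.choose_eq_zero_of_lt (by omega : k < x)])]
  rw [Finset.sum_subset (Finset.range_subset_range.2 (by omega : n + 1 ≤ n + k + 1))
      (fun x _ hx => by
        simp only [Finset.mem_range, not_lt] at hx
        have hxx : x ≤ x * j := Nat.le_mul_of_pos_right x (by omega)
        rw [if_neg (by omega)])]
  refine Finset.sum_congr rfl fun m _ => ?_
  rw [mul_comm m j]
  split_ifs with h
  · ring
  · ring
end

section
/- Let F be a field, V an F-vector space, k an even natural number, and W a finite-dimensional subspace of V with dim_F W = k. Let I be the two-sided ideal of Λ(V) generated by ι(W). Then for any w₁, …, w_{k+1} ∈ I and any element x ∈ Λ(V), [w₁, w₂]·[w₃, w₄]⋯[w_{k−1}, w_k]·[w_{k+1}, x] = 0. (This realises the graded identity [y₁,y₂]⋯[y_{k−1},y_k][y_{k+1},x] of the Grassmann algebra E_k for even k, since the even component of E_k decomposes as a central element plus an element of I.) -/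
open ExteriorAlgebra

section Aux

variable (F : Type*) [Field F] (V : Type*) [AddCommGroup V] [Module F V]

/-- The grade involution on the exterior algebra. -/
noncomputable def grassAuxInv : ExteriorAlgebra F V →ₐ[F] ExteriorAlgebra F V :=
  ExteriorAlgebra.lift F ⟨-(ExteriorAlgebra.ι F (M := V)), fun m => by simp⟩

theorem grassAuxInv_ι (v : V) : grassAuxInv F V (ι F v) = -(ι F v) :=
  (ExteriorAlgebra.lift_ι_apply (R := F)
    (-(ExteriorAlgebra.ι F (M := V))) (fun m => by simp) v).trans (by simp)

theorem grassAux_comm (a : ExteriorAlgebra F V) (v : V) :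
    a * ι F v = ι F v * grassAuxInv F V a := by
  induction a using ExteriorAlgebra.induction with
  | algebraMap r => rw [AlgHom.commutes]; exact Algebra.commutes r _
  | ι w =>
      rw [grassAuxInv_ι, mul_neg]
      exact eq_neg_of_add_eq_zero_left (ι_add_mul_swap w v)
  | mul a b ha hb => rw [map_mul, mul_assoc, hb, ← mul_assoc, ha, mul_assoc]
  | add a b ha hb => rw [map_add, add_mul, ha, hb, mul_add]

variable (W : Submodule F V)

/-- Filtration: `grassT m` is spanned by elements `ι v₁ ⋯ ι v_m * b` with `vᵢ ∈ W`. -/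
noncomputable def grassT : ℕ → Submodule F (ExteriorAlgebra F V)
  | 0 => ⊤
  | m + 1 => Submodule.span F
      {x | ∃ v ∈ W, ∃ t ∈ grassT m, x = ι F v * t}

theorem grassT_mul_left : ∀ (m : ℕ) (b t : ExteriorAlgebra F V),
    t ∈ grassT F V W m → b * t ∈ grassT F V W m := by
  intro m
  induction m with
  | zero => intro b t _; exact Submodule.mem_top
  | succ m ih =>
      intro b t ht
      refine Submodule.span_induction ?_ ?_ ?_ ?_ ht
      · rintro x ⟨v, hv, s, hs, rfl⟩
        rw [← mul_assoc, grassAux_comm, mul_assoc]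
        exact Submodule.subset_span ⟨v, hv, _, ih _ _ hs, rfl⟩
      · simp
      · intro x y _ _ hx hy; rw [mul_add]; exact Submodule.add_mem _ hx hy
      · intro c x _ hx; rw [mul_smul_comm]; exact Submodule.smul_mem _ _ hx

theorem grassT_mul_right : ∀ (m : ℕ) (t c : ExteriorAlgebra F V),
    t ∈ grassT F V W m → t * c ∈ grassT F V W m := by
  intro m
  induction m with
  | zero => intro t c _; exact Submodule.mem_top
  | succ m ih =>
      intro t c ht
      refine Submodule.span_induction ?_ ?_ ?_ ?_ ht
      · rintro x ⟨v, hv, s, hs, rfl⟩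
        rw [mul_assoc]
        exact Submodule.subset_span ⟨v, hv, _, ih _ _ hs, rfl⟩
      · simp
      · intro x y _ _ hx hy; rw [add_mul]; exact Submodule.add_mem _ hx hy
      · intro r x _ hx; rw [smul_mul_assoc]; exact Submodule.smul_mem _ _ hx

theorem grassT_mul : ∀ (m n : ℕ) (s t : ExteriorAlgebra F V),
    s ∈ grassT F V W m → t ∈ grassT F V W n → s * t ∈ grassT F V W (m + n) := by
  intro m
  induction m with
  | zero => intro n s t _ ht; simpa using grassT_mul_left F V W n s t ht
  | succ m ih =>
      intro n s t hs ht
      refine Submodule.span_induction ?_ ?_ ?_ ?_ hs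
      · rintro x ⟨v, hv, u, hu, rfl⟩
        rw [mul_assoc]
        have : m + 1 + n = (m + n) + 1 := by omega
        rw [this]
        exact Submodule.subset_span ⟨v, hv, _, ih n u t hu ht, rfl⟩
      · simp
      · intro x y _ _ hx hy; rw [add_mul]; exact Submodule.add_mem _ hx hy
      · intro r x _ hx; rw [smul_mul_assoc]; exact Submodule.smul_mem _ _ hx

theorem grassI_le_T1 (a : ExteriorAlgebra F V)
    (ha : a ∈ TwoSidedIdeal.span (ExteriorAlgebra.ι F '' (W : Set V))) :
    a ∈ grassT F V W 1 := by
  rw [TwoSidedIdeal.mem_span_iff_mem_addSubgroup_closure] at ha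
  refine AddSubgroup.closure_induction ?_ ?_ ?_ ?_ ha
  · rintro x ⟨y, ⟨c, -, z, ⟨v, hv, rfl⟩, rfl⟩, b, -, rfl⟩
    show c * ι F v * b ∈ grassT F V W 1
    rw [grassAux_comm, mul_assoc]
    exact Submodule.subset_span ⟨v, hv, _, Submodule.mem_top, rfl⟩
  · simp
  · intro x y _ _ hx hy; exact Submodule.add_mem _ hx hy
  · intro x _ hx; exact Submodule.neg_mem _ hx

/-- A product of `m` vectors from `W` prefixing anything: membership in `grassT m`
implies membership in the span of such products. -/
theorem grassT_repr : ∀ (m : ℕ) (t : ExteriorAlgebra F V), t ∈ grassT F V W m →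
    t ∈ Submodule.span F {x | ∃ v : Fin m → V, (∀ i, v i ∈ W) ∧
      ∃ b, x = (List.ofFn fun i => ι F (v i)).prod * b} := by
  intro m
  induction m with
  | zero =>
      intro t _
      exact Submodule.subset_span ⟨fun i => i.elim0, fun i => i.elim0, t, by simp⟩
  | succ m ih =>
      intro t ht
      refine Submodule.span_induction ?_ ?_ ?_ ?_ ht
      · rintro x ⟨v, hv, s, hs, rfl⟩
        have hs' := ih s hs
        have key : ∀ y ∈ Submodule.span F {x | ∃ v : Fin m → V, (∀ i, v i ∈ W) ∧
              ∃ b, x = (List.ofFn fun i => ι F (v i)).prod * b},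
            ι F v * y ∈ Submodule.span F {x | ∃ u : Fin (m+1) → V, (∀ i, u i ∈ W) ∧
              ∃ b, x = (List.ofFn fun i => ι F (u i)).prod * b} := by
          intro y hy
          refine Submodule.span_induction ?_ ?_ ?_ ?_ hy
          · rintro z ⟨u, hu, b, rfl⟩
            refine Submodule.subset_span ⟨Fin.cons v u, ?_, b, ?_⟩
            · intro i
              refine Fin.cases ?_ ?_ i
              · simpa using hv
              · intro j; simpa using hu j
            · rw [List.ofFn_succ, List.prod_cons, ← mul_assoc]
              simp [Fin.cons_succ]
          · simp
          · intro z₁ z₂ _ _ h1 h2; rw [mul_add]; exact Submodule.add_mem _ h1 h2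
          · intro c z _ h; rw [mul_smul_comm]; exact Submodule.smul_mem _ _ h
        exact key s hs'
      · simp
      · intro x y _ _ hx hy; exact Submodule.add_mem _ hx hy
      · intro c x _ hx; exact Submodule.smul_mem _ _ hx

theorem grassT_top_eq_zero [FiniteDimensional F W] {k : ℕ}
    (hW : Module.finrank F W = k) (t : ExteriorAlgebra F V)
    (ht : t ∈ grassT F V W (k + 1)) : t = 0 := by
  have h := grassT_repr F V W (k + 1) t ht
  have hzero : {x : ExteriorAlgebra F V | ∃ v : Fin (k+1) → V, (∀ i, v i ∈ W) ∧
      ∃ b, x = (List.ofFn fun i => ι F (v i)).prod * b} ⊆ {0} := by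
    rintro x ⟨v, hv, b, rfl⟩
    have hdep : ¬ LinearIndependent F v := by
      intro hind
      have hv' : LinearIndependent F (fun i => (⟨v i, hv i⟩ : W)) := by
        apply LinearIndependent.of_comp W.subtype
        convert hind
        rfl
      have := hv'.fintype_card_le_finrank
      rw [hW, Fintype.card_fin] at this
      omega
    have : (ιMulti F (k+1) v : ExteriorAlgebra F V) = 0 :=
      AlternatingMap.map_linearDependent _ v hdep
    rw [ιMulti_apply] at this
    simp only [Set.mem_singleton_iff]
    rw [this, zero_mul]
  have : t ∈ Submodule.span F ({0} : Set (ExteriorAlgebra F V)) :=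
    Submodule.span_mono hzero h
  simpa using this

end Aux

/-- Let `k` be even, `W` a `k`-dimensional subspace of `V`, and `I` the two-sided ideal of
Λ(V) generated by `ι(W)`. For any `w₁, …, w_{k+1} ∈ I` and any `x ∈ Λ(V)` the product
`[w₁,w₂]⋯[w_{k−1},w_k]·[w_{k+1},x]` vanishes (the graded identity of `E_k` for even `k`). -/
theorem grassmann_commutator_product_vanishes_even
    (F : Type*) [Field F] (V : Type*) [AddCommGroup V] [Module F V]
    (k : ℕ) (hk : Even k) (W : Submodule F V) [FiniteDimensional F W]
    (hW : Module.finrank F W = k)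
    (I : TwoSidedIdeal (ExteriorAlgebra F V))
    (hI : I = TwoSidedIdeal.span (ExteriorAlgebra.ι F '' (W : Set V)))
    (w : Fin (k + 1) → ExteriorAlgebra F V) (hw : ∀ i, w i ∈ I)
    (x : ExteriorAlgebra F V) :
    (List.ofFn fun i : Fin (k / 2) =>
        w ⟨2 * (i : ℕ), by have := i.2; rcases hk with ⟨m, hm⟩; omega⟩
            * w ⟨2 * (i : ℕ) + 1, by have := i.2; rcases hk with ⟨m, hm⟩; omega⟩
          - w ⟨2 * (i : ℕ) + 1, by have := i.2; rcases hk with ⟨m, hm⟩; omega⟩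
            * w ⟨2 * (i : ℕ), by have := i.2; rcases hk with ⟨m, hm⟩; omega⟩).prod
        * (w ⟨k, by omega⟩ * x - x * w ⟨k, by omega⟩)
      = 0 := by
  subst hI
  -- every w i is in grassT 1
  have hT1 : ∀ i, w i ∈ grassT F V W 1 := fun i => grassI_le_T1 F V W _ (hw i)
  -- each commutator of w's is in grassT 2
  have hcomm : ∀ i j : Fin (k+1), w i * w j - w j * w i ∈ grassT F V W 2 :=
    fun i j => Submodule.sub_mem _
      (grassT_mul F V W 1 1 _ _ (hT1 i) (hT1 j))
      (grassT_mul F V W 1 1 _ _ (hT1 j) (hT1 i))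
  -- the product of the list lies in grassT (2 * (k/2)) = grassT k
  have hlist : ∀ (l : List (ExteriorAlgebra F V)),
      (∀ a ∈ l, a ∈ grassT F V W 2) → l.prod ∈ grassT F V W (2 * l.length) := by
    intro l
    induction l with
    | nil =>
        intro _
        show (1 : ExteriorAlgebra F V) ∈ grassT F V W (2 * 0)
        exact Submodule.mem_top
    | cons a l ih =>
        intro h
        rw [List.prod_cons, List.length_cons]
        have : 2 * (l.length + 1) = 2 + 2 * l.length := by ring
        rw [this]
        exact grassT_mul F V W 2 (2 * l.length) _ _ (h a (by simp))
          (ih fun b hb => h b (List.mem_cons_of_mem _ hb))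
  have hk2 : 2 * (k / 2) = k := by rcases hk with ⟨m, hm⟩; omega
  have hP : ∀ f : Fin (k / 2) → ExteriorAlgebra F V, (∀ i, f i ∈ grassT F V W 2) →
      (List.ofFn f).prod ∈ grassT F V W k := by
    intro f hf
    have := hlist (List.ofFn f) (by
      intro a ha
      rw [List.mem_ofFn] at ha
      obtain ⟨i, rfl⟩ := ha
      exact hf i)
    rwa [List.length_ofFn, hk2] at this
  -- the final commutator is in grassT 1
  have hlast : w ⟨k, by omega⟩ * x - x * w ⟨k, by omega⟩ ∈ grassT F V W 1 :=
    Submodule.sub_mem _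
      (grassT_mul_right F V W 1 _ x (hT1 ⟨k, by omega⟩))
      (grassT_mul_left F V W 1 x _ (hT1 ⟨k, by omega⟩))
  exact grassT_top_eq_zero F V W hW _
    (grassT_mul F V W k 1 _ _ (hP _ fun i => hcomm _ _) hlast)
end
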